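/- Let Q ⊆ [0,1]^{q+1+r} be a polytope with the x-0/1 property whose unique extension of each x ∈ {0,1}^q has w-coordinate equal to w_x ∈ {0,1}. For x̄ ∈ {0,1}^q with m = 1ᵀx̄, c_j = 2x̄_j − 1, and 0 < d ≤ 1/2: if w_{x̄} = 1 then max{cᵀx + d·w : (x,w,s) ∈ Q} = m + d, attained uniquely at the 0/1 extension of x̄; if w_{x̄} = 0, then the maximum is strictly less than m + d. -/
import Mathlib


/-- 0/1 real vector corresponding to a boolean vector. -/
def bvec {q : ℕ} (x : Fin q → Bool) : Fin q → ℝ := fun j => if x j then 1 else 0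

theorem wef_optimization (q r : ℕ) (Q : Set ((Fin q → ℝ) × ℝ × (Fin r → ℝ)))
    -- Q is contained in the unit cube
    (hcube : ∀ p ∈ Q, (∀ j, 0 ≤ p.1 j ∧ p.1 j ≤ 1) ∧ (0 ≤ p.2.1 ∧ p.2.1 ≤ 1) ∧
      ∀ l, 0 ≤ p.2.2 l ∧ p.2.2 l ≤ 1)
    (w : (Fin q → Bool) → Bool)
    -- x-0/1 property: every x ∈ {0,1}^q extends uniquely to a point of Q,
    -- that point is 0/1-valued and its w-coordinate is w_x
    (h01 : ∀ x : Fin q → Bool, ∃ s : Fin r → Bool,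
      (bvec x, if w x then (1 : ℝ) else 0, bvec s) ∈ Q ∧
      ∀ p ∈ Q, p.1 = bvec x → p = (bvec x, if w x then (1 : ℝ) else 0, bvec s))
    (xbar : Fin q → Bool) (d : ℝ) (hd0 : 0 < d) (hd1 : d ≤ 1 / 2) :
    (w xbar = true → ∃ s : Fin r → Bool,
      (bvec xbar, (1 : ℝ), bvec s) ∈ Q ∧
      (∑ j : Fin q, (2 * bvec xbar j - 1) * bvec xbar j) + d * 1
        = (∑ j : Fin q, bvec xbar j) + d ∧
      ∀ p ∈ Q,
        (∑ j : Fin q, (2 * bvec xbar j - 1) * p.1 j) + d * p.2.1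
            ≤ (∑ j : Fin q, bvec xbar j) + d ∧
        ((∑ j : Fin q, (2 * bvec xbar j - 1) * p.1 j) + d * p.2.1
            = (∑ j : Fin q, bvec xbar j) + d → p = (bvec xbar, (1 : ℝ), bvec s))) ∧
    (w xbar = false → ∀ p ∈ Q,
      (∑ j : Fin q, (2 * bvec xbar j - 1) * p.1 j) + d * p.2.1
        < (∑ j : Fin q, bvec xbar j) + d) := by
  obtain ⟨s, hsQ, huniq⟩ := h01 xbar
  have key : ∀ p ∈ Q,
      ((∑ j : Fin q, (2 * bvec xbar j - 1) * p.1 j) + d * p.2.1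
        ≤ (∑ j : Fin q, bvec xbar j) + d) ∧
      ((∑ j : Fin q, (2 * bvec xbar j - 1) * p.1 j) + d * p.2.1
        = (∑ j : Fin q, bvec xbar j) + d →
        p = (bvec xbar, if w xbar then (1 : ℝ) else 0, bvec s) ∧ p.2.1 = 1) := by
    intro p hp
    obtain ⟨hx, hw, _⟩ := hcube p hp
    have hterm : ∀ j ∈ Finset.univ, (2 * bvec xbar j - 1) * p.1 j ≤ bvec xbar j := by
      intro j _
      have h1 := (hx j).1
      have h2 := (hx j).2
      unfold bvec
      split <;> nlinarith
    have hsum : (∑ j : Fin q, (2 * bvec xbar j - 1) * p.1 j) ≤ ∑ j : Fin q, bvec xbar j :=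
      Finset.sum_le_sum hterm
    have hwle : d * p.2.1 ≤ d := by nlinarith [hw.2, hd0]
    refine ⟨by linarith, fun heq => ?_⟩
    have hsum_eq : (∑ j : Fin q, (2 * bvec xbar j - 1) * p.1 j)
        = ∑ j : Fin q, bvec xbar j := by linarith
    have hweq : p.2.1 = 1 := by nlinarith
    have hterm_eq := (Finset.sum_eq_sum_iff_of_le hterm).mp hsum_eq
    have hp1 : p.1 = bvec xbar := by
      funext j
      have h := hterm_eq j (Finset.mem_univ j)
      unfold bvec at h ⊢
      split at h <;> [skip; skip] <;> simp_all <;> linarith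
    exact ⟨huniq p hp hp1, hweq⟩
  constructor
  · intro hwt
    have hbv : ∀ j, (2 * bvec xbar j - 1) * bvec xbar j = bvec xbar j := by
      intro j; unfold bvec; split <;> ring
    refine ⟨s, by simpa [hwt] using hsQ, by simp only [hbv]; ring, fun p hp => ?_⟩
    obtain ⟨hle, heq⟩ := key p hp
    refine ⟨hle, fun h => ?_⟩
    have := (heq h).1
    simpa [hwt] using this
  · intro hwf p hp
    obtain ⟨hle, heq⟩ := key p hp
    rcases lt_or_eq_of_le hle with h | h
    · exact h
    · obtain ⟨hpe, hw1⟩ := heq h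
      simp only [hwf, Bool.false_eq_true, if_false] at hpe
      rw [hpe] at hw1
      norm_num at hw1
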